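/- Consider the open necklace with 12 beads of 3 types given in order by the type sequence (0,0,0,1,1,1,0,0,0,2,2,2) (three gray, three red, three gray, three green beads). This necklace does not admit a binary necklace splitting among k = 3 thieves of size 6: there do not exist integer cut points 0 = x_0 ≤ x_1 ≤ ⋯ ≤ x_6 ≤ x_7 = 12, an assignment a : Fin 7 → Fin 3 of the pieces to the thieves under which every thief receives exactly 2 beads of type 0, 1 bead of type 1, and 1 bead of type 2, and an injective map s : Fin 3 → (Fin 2 → Bool) such that whenever pieces j and j' are adjacent, the strings s(a(j)) and s(a(j')) differ in exactly one coordinate. -/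

import Mathlib

def cutX (x : Fin 8 → ℕ) (i : ℕ) : ℕ := x ⟨min i 7, by omega⟩

def Jf (x : Fin 8 → ℕ) (n : ℕ) : ℕ :=
  if cutX x 6 ≤ n then 6 else if cutX x 5 ≤ n then 5 else if cutX x 4 ≤ n then 4
  else if cutX x 3 ≤ n then 3 else if cutX x 2 ≤ n then 2 else if cutX x 1 ≤ n then 1 else 0

lemma Jf_le6 (x : Fin 8 → ℕ) (n : ℕ) : Jf x n ≤ 6 := by
  unfold Jf; split_ifs <;> omega

def fT (x : Fin 8 → ℕ) (a : Fin 7 → Fin 3) (n : ℕ) : Fin 3 :=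
  a ⟨Jf x n, Nat.lt_succ_of_le (Jf_le6 x n)⟩

lemma cutX_mono {x : Fin 8 → ℕ} (hm : Monotone x) {i j : ℕ} (h : i ≤ j) :
    cutX x i ≤ cutX x j := by
  apply hm
  simp only [Fin.mk_le_mk]
  omega

lemma cutX_castSucc (x : Fin 8 → ℕ) (j : Fin 7) : cutX x j.val = x j.castSucc := by
  have h : (⟨min (j.val) 7, by omega⟩ : Fin 8) = j.castSucc := by
    apply Fin.ext
    have := j.isLt
    simp only [Fin.coe_castSucc]
    omega
  exact congrArg x h

lemma cutX_succ (x : Fin 8 → ℕ) (j : Fin 7) : cutX x (j.val + 1) = x j.succ := by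
  have h : (⟨min (j.val + 1) 7, by omega⟩ : Fin 8) = j.succ := by
    apply Fin.ext
    have := j.isLt
    simp only [Fin.val_succ]
    omega
  exact congrArg x h

lemma cutX_zero (x : Fin 8 → ℕ) : cutX x 0 = x 0 := by congr 1

lemma cutX_seven (x : Fin 8 → ℕ) : cutX x 7 = x 7 := by congr 1

lemma Jf_lower {x : Fin 8 → ℕ} (hx0 : x 0 = 0) (n : ℕ) : cutX x (Jf x n) ≤ n := by
  have h0 : cutX x 0 = 0 := by rw [cutX_zero, hx0]
  unfold Jf; split_ifs <;> omega

lemma Jf_upper {x : Fin 8 → ℕ} (hx7 : x 7 = 12) {n : ℕ} (hn : n < 12) :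
    n < cutX x (Jf x n + 1) := by
  have h7 : cutX x 7 = 12 := by rw [cutX_seven, hx7]
  unfold Jf; split_ifs <;> simp only [Nat.reduceAdd] <;> omega

lemma Jf_mono (x : Fin 8 → ℕ) {n m : ℕ} (h : n ≤ m) : Jf x n ≤ Jf x m := by
  unfold Jf; split_ifs <;> omega

lemma Jf_uniq {x : Fin 8 → ℕ} (hm : Monotone x) (hx0 : x 0 = 0) (hx7 : x 7 = 12) {j n : ℕ}
    (hn : n < 12) (hj : j ≤ 6) (h1 : cutX x j ≤ n) (h2 : n < cutX x (j + 1)) : Jf x n = j := by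
  rcases lt_trichotomy (Jf x n) j with h | h | h
  · have h3 := cutX_mono hm (show Jf x n + 1 ≤ j by omega)
    have h4 := Jf_upper hx7 hn (x := x)
    omega
  · exact h
  · have h3 := cutX_mono hm (show j + 1 ≤ Jf x n by omega)
    have h4 := Jf_lower hx0 n
    omega

lemma mem_iff {x : Fin 8 → ℕ} {a : Fin 7 → Fin 3} (hm : Monotone x) (hx0 : x 0 = 0)
    (hx7 : x 7 = 12) {n : ℕ} (hn : n < 12) (th : Fin 3) :
    (∃ j : Fin 7, a j = th ∧ x j.castSucc ≤ n ∧ n < x j.succ) ↔ fT x a n = th := by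
  constructor
  · rintro ⟨j, haj, h1, h2⟩
    rw [← cutX_castSucc x j] at h1
    rw [← cutX_succ x j] at h2
    have hu := Jf_uniq hm hx0 hx7 hn (by omega : j.val ≤ 6) h1 h2
    rw [← haj]
    unfold fT
    exact congrArg a (Fin.ext hu)
  · intro h
    refine ⟨⟨Jf x n, Nat.lt_succ_of_le (Jf_le6 x n)⟩, h, ?_, ?_⟩
    · rw [← cutX_castSucc x ⟨Jf x n, Nat.lt_succ_of_le (Jf_le6 x n)⟩]
      exact Jf_lower hx0 n
    · rw [← cutX_succ x ⟨Jf x n, Nat.lt_succ_of_le (Jf_le6 x n)⟩]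
      exact Jf_upper hx7 hn

lemma cube3 : ∀ s : Fin 3 → Fin 2 → Bool, Function.Injective s →
    ∃ w : Fin 3, ∀ p q : Fin 3, p ≠ q → p ≠ w → q ≠ w →
      (Finset.univ.filter fun i => s p i ≠ s q i).card = 2 := by decide

theorem stmt8 :
    ¬ ∃ (x : Fin 8 → ℕ) (a : Fin 7 → Fin 3) (s : Fin 3 → Fin 2 → Bool),
      Monotone x ∧ x 0 = 0 ∧ x 7 = 12 ∧
      Function.Injective s ∧
      -- each thief receives exactly 2 beads of type 0, 1 of type 1 and 1 of type 2
      (∀ th : Fin 3,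
        (Finset.univ.filter (fun n : Fin 12 =>
            (![0, 0, 0, 1, 1, 1, 0, 0, 0, 2, 2, 2] : Fin 12 → Fin 3) n = 0 ∧
            ∃ j : Fin 7, a j = th ∧
              x j.castSucc ≤ (n : ℕ) ∧ (n : ℕ) < x j.succ)).card = 2 ∧
        (Finset.univ.filter (fun n : Fin 12 =>
            (![0, 0, 0, 1, 1, 1, 0, 0, 0, 2, 2, 2] : Fin 12 → Fin 3) n = 1 ∧
            ∃ j : Fin 7, a j = th ∧
              x j.castSucc ≤ (n : ℕ) ∧ (n : ℕ) < x j.succ)).card = 1 ∧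
        (Finset.univ.filter (fun n : Fin 12 =>
            (![0, 0, 0, 1, 1, 1, 0, 0, 0, 2, 2, 2] : Fin 12 → Fin 3) n = 2 ∧
            ∃ j : Fin 7, a j = th ∧
              x j.castSucc ≤ (n : ℕ) ∧ (n : ℕ) < x j.succ)).card = 1) ∧
      -- adjacent pieces go to thieves whose binary strings differ in exactly one bit
      (∀ j j' : Fin 7, j < j' →
        x j.castSucc < x j.succ → x j'.castSucc < x j'.succ →
        (∀ i : Fin 7, j < i → i < j' → x i.castSucc = x i.succ) →
        (Finset.univ.filter (fun i => s (a j) i ≠ s (a j') i)).card = 1) := by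
  rintro ⟨x, a, s, hm, hx0, hx7, hs, hcount, hadj⟩
  set f : ℕ → Fin 3 := fT x a with hfdef
  -- rewrite the three counting conditions via the owner function f
  have hfilter : ∀ (c th : Fin 3),
      (Finset.univ.filter (fun n : Fin 12 =>
          (![0, 0, 0, 1, 1, 1, 0, 0, 0, 2, 2, 2] : Fin 12 → Fin 3) n = c ∧
          ∃ j : Fin 7, a j = th ∧ x j.castSucc ≤ (n : ℕ) ∧ (n : ℕ) < x j.succ))
      = (Finset.univ.filter (fun n : Fin 12 =>
          (![0, 0, 0, 1, 1, 1, 0, 0, 0, 2, 2, 2] : Fin 12 → Fin 3) n = c ∧ f (n : ℕ) = th)) := by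
    intro c th
    apply Finset.filter_congr
    intro n _
    exact and_congr_right fun _ => mem_iff hm hx0 hx7 n.isLt th
  have hA : ∀ th : Fin 3,
      (if f 0 = th then 1 else 0) + (if f 1 = th then 1 else 0) + (if f 2 = th then 1 else 0) +
      (if f 6 = th then 1 else 0) + (if f 7 = th then 1 else 0) + (if f 8 = th then 1 else 0)
        = 2 := by
    intro th
    have h := (hcount th).1
    rw [hfilter, Finset.card_filter] at h
    simp only [Fin.sum_univ_succ, Fin.sum_univ_zero, Matrix.cons_val_zero, Matrix.cons_val_succ,
      Fin.val_zero, Fin.val_succ, Fin.isValue] at h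
    norm_num [show ((2:Fin 3) = 0) ↔ False from by decide,
      show ((1:Fin 3) = 0) ↔ False from by decide] at h
    omega
  have hB : ∀ th : Fin 3,
      (if f 3 = th then 1 else 0) + (if f 4 = th then 1 else 0) + (if f 5 = th then 1 else 0)
        = 1 := by
    intro th
    have h := (hcount th).2.1
    rw [hfilter, Finset.card_filter] at h
    simp only [Fin.sum_univ_succ, Fin.sum_univ_zero, Matrix.cons_val_zero, Matrix.cons_val_succ,
      Fin.val_zero, Fin.val_succ, Fin.isValue] at h
    norm_num [show ((2:Fin 3) = 1) ↔ False from by decide,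
      show ((0:Fin 3) = 1) ↔ False from by decide] at h
    omega
  have hC2 : ∀ th : Fin 3,
      (if f 9 = th then 1 else 0) + (if f 10 = th then 1 else 0) + (if f 11 = th then 1 else 0)
        = 1 := by
    intro th
    have h := (hcount th).2.2
    rw [hfilter, Finset.card_filter] at h
    simp only [Fin.sum_univ_succ, Fin.sum_univ_zero, Matrix.cons_val_zero, Matrix.cons_val_succ,
      Fin.val_zero, Fin.val_succ, Fin.isValue] at h
    norm_num [show ((1:Fin 3) = 2) ↔ False from by decide,
      show ((0:Fin 3) = 2) ↔ False from by decide] at h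
    omega
  -- pairwise distinctness at the two colored blocks
  have d34 : f 3 ≠ f 4 := by
    intro e; have h := hB (f 4); rw [if_pos e, if_pos rfl] at h; split_ifs at h <;> omega
  have d45 : f 4 ≠ f 5 := by
    intro e; have h := hB (f 4); rw [if_pos rfl, if_pos e.symm] at h; split_ifs at h <;> omega
  have d35 : f 3 ≠ f 5 := by
    intro e; have h := hB (f 3); rw [if_pos rfl, if_pos e.symm] at h; split_ifs at h <;> omega
  have d910 : f 9 ≠ f 10 := by
    intro e; have h := hC2 (f 10); rw [if_pos e, if_pos rfl] at h; split_ifs at h <;> omega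
  have d1011 : f 10 ≠ f 11 := by
    intro e; have h := hC2 (f 10); rw [if_pos rfl, if_pos e.symm] at h; split_ifs at h <;> omega
  have d911 : f 9 ≠ f 11 := by
    intro e; have h := hC2 (f 9); rw [if_pos rfl, if_pos e.symm] at h; split_ifs at h <;> omega
  -- the middle thief w
  obtain ⟨w, hw⟩ := cube3 s hs
  have hfeq : ∀ n m : ℕ, Jf x n = Jf x m → f n = f m := by
    intro n m e
    show fT x a n = fT x a m
    unfold fT
    exact congrArg a (Fin.ext e)
  have hJlt : ∀ n : ℕ, f n ≠ f (n + 1) → Jf x n < Jf x (n + 1) := by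
    intro n hne
    exact lt_of_le_of_ne (Jf_mono x (by omega)) (fun e => hne (hfeq n (n + 1) e))
  -- adjacency for consecutive beads with different owners
  have hadj' : ∀ n : ℕ, n ≤ 10 → f n ≠ f (n + 1) →
      (Finset.univ.filter fun i => s (f n) i ≠ s (f (n + 1)) i).card = 1 := by
    intro n hn hne
    have hlt := hJlt n hne
    have hn12 : n < 12 := by omega
    have hn112 : n + 1 < 12 := by omega
    set j : Fin 7 := ⟨Jf x n, Nat.lt_succ_of_le (Jf_le6 x n)⟩ with hj
    set j' : Fin 7 := ⟨Jf x (n + 1), Nat.lt_succ_of_le (Jf_le6 x (n + 1))⟩ with hj'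
    have h1 : x j.castSucc < x j.succ := by
      rw [← cutX_castSucc x j, ← cutX_succ x j]
      exact lt_of_le_of_lt (Jf_lower hx0 n) (Jf_upper hx7 hn12)
    have h2 : x j'.castSucc < x j'.succ := by
      rw [← cutX_castSucc x j', ← cutX_succ x j']
      exact lt_of_le_of_lt (Jf_lower hx0 (n + 1)) (Jf_upper hx7 hn112)
    have hmid : ∀ i : Fin 7, j < i → i < j' → x i.castSucc = x i.succ := by
      intro i hji hij'
      have hji' : Jf x n < i.val := hji
      have hij'' : i.val < Jf x (n + 1) := hij'
      have e1 : cutX x (Jf x n + 1) ≤ cutX x i.val := cutX_mono hm (by omega)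
      have e2 : cutX x (i.val + 1) ≤ cutX x (Jf x (n + 1)) := cutX_mono hm (by omega)
      have e3 : cutX x i.val ≤ cutX x (i.val + 1) := cutX_mono hm (by omega)
      have e4 := Jf_upper hx7 hn12 (x := x)
      have e5 := Jf_lower hx0 (n + 1)
      rw [← cutX_castSucc x i, ← cutX_succ x i]
      omega
    exact hadj j j' hlt h1 h2 hmid
  -- transitions go through w
  have tf : ∀ n : ℕ, n ≤ 10 → f n ≠ f (n + 1) → f n = w ∨ f (n + 1) = w := by
    intro n hn hne
    by_contra hc
    push_neg at hc
    have h1 := hadj' n hn hne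
    have h2 := hw (f n) (f (n + 1)) hne hc.1 hc.2
    omega
  -- if no change on an interval then endpoints agree
  have allEq : ∀ (k p : ℕ), (∀ c, p ≤ c → c < p + k → f c = f (c + 1)) → f p = f (p + k) := by
    intro k
    induction k with
    | zero => intro p _; rfl
    | succ k ih =>
      intro p hp
      have h1 := ih p (fun c hc1 hc2 => hp c hc1 (by omega))
      have h2 := hp (p + k) (by omega) (by omega)
      exact h1.trans h2
  have chg : ∀ p q : ℕ, p ≤ q → f p ≠ f q → ∃ c, p ≤ c ∧ c < q ∧ f c ≠ f (c + 1) := by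
    intro p q hpq hne
    by_contra hc
    push_neg at hc
    have h := allEq (q - p) p (fun c h1 h2 => hc c h1 (by omega))
    rw [show p + (q - p) = q from by omega] at h
    exact hne h
  -- between an occurrence of two non-w thieves there is a w
  have betw : ∀ (k p : ℕ), p + k ≤ 11 → f p ≠ w → f (p + k) ≠ w → f p ≠ f (p + k) →
      ∃ q, p < q ∧ q < p + k ∧ f q = w := by
    intro k
    induction k with
    | zero => intro p _ _ _ hne; exact absurd rfl hne
    | succ k ih =>
      intro p hle hp hpk hne
      by_cases h1 : f (p + 1) = w
      · rcases Nat.eq_zero_or_pos k with hk | hk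
        · subst hk; exact absurd h1 hpk
        · exact ⟨p + 1, by omega, by omega, h1⟩
      · have heq : f p = f (p + 1) := by
          by_contra hne2
          rcases tf p (by omega) hne2 with h | h
          · exact hp h
          · exact h1 h
        rcases Nat.eq_zero_or_pos k with hk | hk
        · subst hk; exact absurd heq hne
        · have e : p + 1 + k = p + (k + 1) := by omega
          have hpk' : f (p + 1 + k) ≠ w := by rw [e]; exact hpk
          have hne' : f (p + 1) ≠ f (p + 1 + k) := by
            rw [e, ← heq]; exact hne
          obtain ⟨q, hq1, hq2, hq3⟩ := ih (p + 1) (by omega) (heq ▸ hp) hpk' hne'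
          exact ⟨q, by omega, by omega, hq3⟩
  -- the middle bead of each colored block belongs to w
  have f4w : f 4 = w := by
    by_contra h4
    have h3 : f 3 = w := by rcases tf 3 (by omega) d34 with h | h; exact h; exact absurd h h4
    have h5 : f 5 = w := by rcases tf 4 (by omega) d45 with h | h; exact absurd h h4; exact h
    exact d35 (h3.trans h5.symm)
  have f10w : f 10 = w := by
    by_contra h10
    have h9 : f 9 = w := by rcases tf 9 (by omega) d910 with h | h; exact h; exact absurd h h10
    have h11 : f 11 = w := by
      rcases tf 10 (by omega) d1011 with h | h; exact absurd h h10; exact h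
    exact d911 (h9.trans h11.symm)
  have f5w : f 5 ≠ w := fun e => d45 (f4w.trans e.symm)
  have f3w : f 3 ≠ w := fun e => d34 (e.trans f4w.symm)
  have f9w : f 9 ≠ w := fun e => d910 (e.trans f10w.symm)
  -- the set of change positions has at most 6 elements
  set C : Finset ℕ := (Finset.range 11).filter (fun n => f n ≠ f (n + 1)) with hC
  have memC' : ∀ p : ℕ, p ∈ C → p < 11 ∧ f p ≠ f (p + 1) := by
    intro p hp
    rw [hC, Finset.mem_filter, Finset.mem_range] at hp
    exact hp
  have hC6 : C.card ≤ 6 := by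
    have hle : C.card ≤ (Finset.Icc 1 6).card := by
      apply Finset.card_le_card_of_injOn (fun n => Jf x (n + 1))
      · intro n hn
        obtain ⟨hn1, hn2⟩ := memC' n hn
        have := hJlt n hn2
        have := Jf_le6 x (n + 1)
        simp only [Finset.coe_Icc, Set.mem_Icc]
        omega
      · intro n hn m hmm e
        obtain ⟨hn1, hn2⟩ := memC' n (Finset.mem_coe.mp hn)
        obtain ⟨hm1, hm2⟩ := memC' m (Finset.mem_coe.mp hmm)
        simp only at e
        by_contra hne
        rcases lt_or_gt_of_ne hne with h | h
        · have h1 : Jf x (n + 1) ≤ Jf x m := Jf_mono x (by omega)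
          have h2 := hJlt m hm2
          omega
        · have h1 : Jf x (m + 1) ≤ Jf x n := Jf_mono x (by omega)
          have h2 := hJlt n hn2
          omega
    simpa using hle
  have memC : ∀ n : ℕ, n < 11 → f n ≠ f (n + 1) → n ∈ C := by
    intro n h1 h2
    rw [hC, Finset.mem_filter, Finset.mem_range]
    exact ⟨h1, h2⟩
  by_cases hA6 : ∃ m, 6 ≤ m ∧ m ≤ 8 ∧ f m = w
  · -- Case A : w owns a bead among {6,7,8}
    obtain ⟨m, hm6, hm8, hmw⟩ := hA6
    obtain ⟨c1, hc11, hc12, hc13⟩ := chg 5 m (by omega) (by rw [hmw]; exact f5w)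
    obtain ⟨c2, hc21, hc22, hc23⟩ := chg m 9 (by omega) (by rw [hmw]; exact fun e => f9w e.symm)
    set S : Finset ℕ := insert 3 (insert 4 (insert 9 (insert 10 ({c1, c2} : Finset ℕ)))) with hS
    have hSsub : S ⊆ C := by
      intro y hy
      rw [hS] at hy
      simp only [Finset.mem_insert, Finset.mem_singleton] at hy
      rcases hy with rfl | rfl | rfl | rfl | h | h
      · exact memC 3 (by omega) d34
      · exact memC 4 (by omega) d45
      · exact memC 9 (by omega) d910
      · exact memC 10 (by omega) d1011
      · rw [h]; exact memC c1 (by omega) hc13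
      · rw [h]; exact memC c2 (by omega) hc23
    have hScard : S.card = 6 := by
      rw [hS]
      rw [Finset.card_insert_of_notMem (by
        simp only [Finset.mem_insert, Finset.mem_singleton]; push_neg
        refine ⟨by omega, by omega, by omega, by omega, by omega⟩)]
      rw [Finset.card_insert_of_notMem (by
        simp only [Finset.mem_insert, Finset.mem_singleton]; push_neg
        refine ⟨by omega, by omega, by omega, by omega⟩)]
      rw [Finset.card_insert_of_notMem (by
        simp only [Finset.mem_insert, Finset.mem_singleton]; push_neg
        refine ⟨by omega, by omega, by omega⟩)]
      rw [Finset.card_insert_of_notMem (by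
        simp only [Finset.mem_insert, Finset.mem_singleton]; push_neg
        refine ⟨by omega, by omega⟩)]
      rw [Finset.card_pair (by omega)]
    have hCS : S = C := Finset.eq_of_subset_of_card_le hSsub (by rw [hScard]; exact hC6)
    have hnotC : ∀ y : ℕ, y < 3 → f y = f (y + 1) := by
      intro y hy
      by_contra hne
      have hyC := memC y (by omega) hne
      rw [← hCS, hS] at hyC
      simp only [Finset.mem_insert, Finset.mem_singleton] at hyC
      omega
    have e0 : f 0 = f 3 := by
      have h1 := hnotC 0 (by omega)
      have h2 := hnotC 1 (by omega)
      have h3 := hnotC 2 (by omega)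
      exact (h1.trans h2).trans h3
    have e1 : f 1 = f 3 := by
      have h2 := hnotC 1 (by omega)
      have h3 := hnotC 2 (by omega)
      exact h2.trans h3
    have e2 : f 2 = f 3 := hnotC 2 (by omega)
    have h := hA (f 3)
    rw [if_pos e0, if_pos e1, if_pos e2] at h
    split_ifs at h <;> omega
  · -- Case B : no w among beads {6,7,8}
    push_neg at hA6
    by_cases h59 : f 5 = f 9
    · by_cases h6 : f 6 = f 5
      · by_cases h7 : f 7 = f 5
        · by_cases h8 : f 8 = f 5
          · have h := hA (f 5)
            rw [if_pos h6, if_pos h7, if_pos h8] at h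
            split_ifs at h <;> omega
          · -- f 8 ≠ f 5
            obtain ⟨q, hq1, hq2, hq3⟩ := betw 3 5 (by omega) f5w
              (hA6 8 (by omega) (by omega)) (fun e => h8 e.symm)
            exact hA6 q (by omega) (by omega) hq3
        · obtain ⟨q, hq1, hq2, hq3⟩ := betw 2 5 (by omega) f5w
            (hA6 7 (by omega) (by omega)) (fun e => h7 e.symm)
          exact hA6 q (by omega) (by omega) hq3
      · obtain ⟨q, hq1, hq2, hq3⟩ := betw 1 5 (by omega) f5w
          (hA6 6 (by omega) (by omega)) (fun e => h6 e.symm)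
        exact hA6 q (by omega) (by omega) hq3
    · obtain ⟨q, hq1, hq2, hq3⟩ := betw 4 5 (by omega) f5w f9w h59
      exact hA6 q (by omega) (by omega) hq3
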